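/- Let Q : ℝ² → ℝ be the harmonic polynomial Q(x,y) = x⁴ + y⁴ − 6x²y², and let G(x,y) = Q(x,y)·log(x² + y²) for (x,y) ≠ (0,0). Then there exists a constant C > 0 such that for all (x,y) with 0 < x² + y² < 1 and all choices i, j ∈ {x, y}, the second partial derivatives of the Laplacian satisfy |∂_i∂_j(ΔG)(x,y)| ≤ C; that is, all second partial derivatives of ΔG are bounded on the punctured unit ball. -/

import Mathlib

/-- Partial derivative in the first (x) variable. -/
noncomputable def pdx (f : ℝ → ℝ → ℝ) : ℝ → ℝ → ℝ := fun x y => deriv (fun x' => f x' y) x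

/-- Partial derivative in the second (y) variable. -/
noncomputable def pdy (f : ℝ → ℝ → ℝ) : ℝ → ℝ → ℝ := fun x y => deriv (fun y' => f x y') y

/-- The harmonic polynomial `Q(x,y) = x⁴ + y⁴ − 6x²y²`. -/
noncomputable def Q : ℝ → ℝ → ℝ := fun x y => x ^ 4 + y ^ 4 - 6 * x ^ 2 * y ^ 2

/-- `G(x,y) = Q(x,y) · log(x² + y²)`. -/
noncomputable def G : ℝ → ℝ → ℝ := fun x y => Q x y * Real.log (x ^ 2 + y ^ 2)

/-- The Laplacian of `G`. -/
noncomputable def lapG : ℝ → ℝ → ℝ := fun x y => pdx (pdx G) x y + pdy (pdy G) x y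

/- Closed forms -/
noncomputable def GxF : ℝ → ℝ → ℝ := fun x y =>
  (4*x^3 - 12*x*y^2) * Real.log (x^2+y^2) + (x^4+y^4-6*x^2*y^2) * (2*x) / (x^2+y^2)
noncomputable def GyF : ℝ → ℝ → ℝ := fun x y =>
  (4*y^3 - 12*x^2*y) * Real.log (x^2+y^2) + (x^4+y^4-6*x^2*y^2) * (2*y) / (x^2+y^2)
noncomputable def GxxF : ℝ → ℝ → ℝ := fun x y =>
  (12*x^2 - 12*y^2) * Real.log (x^2+y^2) +
    (14*x^6 - 18*x^4*y^2 - 62*x^2*y^4 + 2*y^6)/(x^2+y^2)^2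
noncomputable def GyyF : ℝ → ℝ → ℝ := fun x y =>
  (12*y^2 - 12*x^2) * Real.log (x^2+y^2) +
    (2*x^6 - 62*x^4*y^2 - 18*x^2*y^4 + 14*y^6)/(x^2+y^2)^2
noncomputable def L : ℝ → ℝ → ℝ := fun x y => 16*(x^4+y^4-6*x^2*y^2)/(x^2+y^2)
noncomputable def LxF : ℝ → ℝ → ℝ := fun x y => (32*x^5+64*x^3*y^2-224*x*y^4)/(x^2+y^2)^2
noncomputable def LyF : ℝ → ℝ → ℝ := fun x y => (32*y^5+64*x^2*y^3-224*x^4*y)/(x^2+y^2)^2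
noncomputable def LxxF : ℝ → ℝ → ℝ := fun x y =>
  (32*x^6+96*x^4*y^2+864*x^2*y^4-224*y^6)/(x^2+y^2)^3
noncomputable def LxyF : ℝ → ℝ → ℝ := fun x y => (-1024*x^3*y^3)/(x^2+y^2)^3
noncomputable def LyyF : ℝ → ℝ → ℝ := fun x y =>
  (-224*x^6+864*x^4*y^2+96*x^2*y^4+32*y^6)/(x^2+y^2)^3

section derivs
variable (x y : ℝ)

lemma hrx : HasDerivAt (fun t : ℝ => t^2+y^2) (2*x) x := by
  simpa using (hasDerivAt_pow 2 x).add_const (y^2)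

lemma hry : HasDerivAt (fun t : ℝ => x^2+t^2) (2*y) y := by
  simpa using (hasDerivAt_pow 2 y).const_add (x^2)

lemma hlogx (h : x^2+y^2 ≠ 0) :
    HasDerivAt (fun t : ℝ => Real.log (t^2+y^2)) (2*x/(x^2+y^2)) x := by
  have H := (Real.hasDerivAt_log h).comp x (hrx x y)
  simpa [Function.comp_def, div_eq_inv_mul] using H

lemma hlogy (h : x^2+y^2 ≠ 0) :
    HasDerivAt (fun t : ℝ => Real.log (x^2+t^2)) (2*y/(x^2+y^2)) y := by
  have H := (Real.hasDerivAt_log h).comp y (hry x y)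
  simpa [Function.comp_def, div_eq_inv_mul] using H

lemma hQx : HasDerivAt (fun t : ℝ => t^4+y^4-6*t^2*y^2) (4*x^3-12*x*y^2) x := by
  have H := ((hasDerivAt_pow 4 x).add_const (y^4)).sub
    (((hasDerivAt_pow 2 x).const_mul 6).mul_const (y^2))
  refine H.congr_deriv ?_
  push_cast; ring

lemma hQy : HasDerivAt (fun t : ℝ => x^4+t^4-6*x^2*t^2) (4*y^3-12*x^2*y) y := by
  have H := (((hasDerivAt_pow 4 y).const_add (x^4))).sub
    ((((hasDerivAt_pow 2 y)).const_mul (6*x^2)))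
  have H2 : HasDerivAt (fun t : ℝ => x^4+t^4-6*x^2*t^2) (4*(y:ℝ)^(4-1) - 6*x^2*(2*y^(2-1))) y := by
    refine H.congr_of_eventuallyEq (Filter.Eventually.of_forall fun t => by simp only [Pi.sub_apply]) |>.congr_deriv ?_
    push_cast; ring
  convert H2 using 1; push_cast; ring

lemma hG_x (h : x^2+y^2 ≠ 0) : HasDerivAt (fun t => G t y) (GxF x y) x := by
  have H := (hQx x y).mul (hlogx x y h)
  have H2 : HasDerivAt (fun t : ℝ => (t^4+y^4-6*t^2*y^2) * Real.log (t^2+y^2)) (GxF x y) x := by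
    refine H.congr_deriv ?_
    simp only [GxF]; ring
  refine H2.congr_of_eventuallyEq (Filter.Eventually.of_forall fun t => by simp only [G, Q])

lemma hG_y (h : x^2+y^2 ≠ 0) : HasDerivAt (fun t => G x t) (GyF x y) y := by
  have H := (hQy x y).mul (hlogy x y h)
  have H2 : HasDerivAt (fun t : ℝ => (x^4+t^4-6*x^2*t^2) * Real.log (x^2+t^2)) (GyF x y) y := by
    refine H.congr_deriv ?_
    simp only [GyF]; ring
  refine H2.congr_of_eventuallyEq (Filter.Eventually.of_forall fun t => by simp only [G, Q])

lemma hQxx : HasDerivAt (fun t : ℝ => 4*t^3-12*t*y^2) (12*x^2-12*y^2) x := by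
  have H := ((hasDerivAt_pow 3 x).const_mul 4).sub
    (((hasDerivAt_id' (x := x)).const_mul 12).mul_const (y^2))
  refine H.congr_deriv ?_
  push_cast; ring

lemma hQyy : HasDerivAt (fun t : ℝ => 4*t^3-12*x^2*t) (12*y^2-12*x^2) y := by
  have H := ((hasDerivAt_pow 3 y).const_mul 4).sub
    ((hasDerivAt_id' (x := y)).const_mul (12*x^2))
  refine H.congr_deriv ?_
  push_cast; ring

lemma h2t : HasDerivAt (fun t : ℝ => 2*t) 2 x := by
  simpa using (hasDerivAt_id x).const_mul 2

lemma hGx_x (h : x^2+y^2 ≠ 0) : HasDerivAt (fun t => GxF t y) (GxxF x y) x := by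
  have H1 := (hQxx x y).mul (hlogx x y h)
  have H2 := ((hQx x y).mul (h2t x)).div (hrx x y) h
  have H := H1.add H2
  have He : (fun t => GxF t y) = fun t : ℝ =>
      (4*t^3-12*t*y^2) * Real.log (t^2+y^2) + (t^4+y^4-6*t^2*y^2) * (2*t) / (t^2+y^2) := rfl
  rw [He]
  refine H.congr_deriv ?_
  simp only [GxxF, Pi.mul_apply]; field_simp; ring

lemma hGy_y (h : x^2+y^2 ≠ 0) : HasDerivAt (fun t => GyF x t) (GyyF x y) y := by
  have H1 := (hQyy x y).mul (hlogy x y h)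
  have h2t' : HasDerivAt (fun t : ℝ => 2*t) 2 y := h2t y
  have H2 := ((hQy x y).mul h2t').div (hry x y) h
  have H := H1.add H2
  have He : (fun t => GyF x t) = fun t : ℝ =>
      (4*t^3-12*x^2*t) * Real.log (x^2+t^2) + (x^4+t^4-6*x^2*t^2) * (2*t) / (x^2+t^2) := rfl
  rw [He]
  refine H.congr_deriv ?_
  simp only [GyyF, Pi.mul_apply]; field_simp; ring

lemma hL_x (h : x^2+y^2 ≠ 0) : HasDerivAt (fun t => L t y) (LxF x y) x := by
  have H := ((hQx x y).const_mul 16).div (hrx x y) h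
  have He : (fun t => L t y) = fun t : ℝ => 16*(t^4+y^4-6*t^2*y^2)/(t^2+y^2) := rfl
  rw [He]
  refine H.congr_deriv ?_
  simp only [LxF]; field_simp; ring

lemma hL_y (h : x^2+y^2 ≠ 0) : HasDerivAt (fun t => L x t) (LyF x y) y := by
  have H := ((hQy x y).const_mul 16).div (hry x y) h
  have He : (fun t => L x t) = fun t : ℝ => 16*(x^4+t^4-6*x^2*t^2)/(x^2+t^2) := rfl
  rw [He]
  refine H.congr_deriv ?_
  simp only [LyF]; field_simp; ring

lemma hrx2 : HasDerivAt (fun t : ℝ => (t^2+y^2)^2) (2*(x^2+y^2)*(2*x)) x := by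
  have := (hrx x y).pow 2
  refine this.congr_deriv ?_; push_cast; ring

lemma hry2 : HasDerivAt (fun t : ℝ => (x^2+t^2)^2) (2*(x^2+y^2)*(2*y)) y := by
  have := (hry x y).pow 2
  refine this.congr_deriv ?_; push_cast; ring

lemma hNx_x : HasDerivAt (fun t : ℝ => 32*t^5+64*t^3*y^2-224*t*y^4)
    (160*x^4+192*x^2*y^2-224*y^4) x := by
  have H := (((hasDerivAt_pow 5 x).const_mul 32).add
    (((hasDerivAt_pow 3 x).const_mul 64).mul_const (y^2))).sub
    (((hasDerivAt_id' (x := x)).const_mul 224).mul_const (y^4))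
  refine H.congr_deriv ?_
  push_cast; ring

lemma hNx_y : HasDerivAt (fun t : ℝ => 32*x^5+64*x^3*t^2-224*x*t^4)
    (128*x^3*y-896*x*y^3) y := by
  have H := (((hasDerivAt_pow 2 y).const_mul (64*x^3)).const_add (32*x^5)).sub
    ((hasDerivAt_pow 4 y).const_mul (224*x))
  refine H.congr_deriv ?_
  push_cast; ring

lemma hNy_x : HasDerivAt (fun t : ℝ => 32*y^5+64*t^2*y^3-224*t^4*y)
    (128*x*y^3-896*x^3*y) x := by
  have H := ((((hasDerivAt_pow 2 x).const_mul 64).mul_const (y^3)).const_add (32*y^5)).sub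
    (((hasDerivAt_pow 4 x).const_mul 224).mul_const y)
  refine H.congr_deriv ?_
  push_cast; ring

lemma hNy_y : HasDerivAt (fun t : ℝ => 32*t^5+64*x^2*t^3-224*x^4*t)
    (160*y^4+192*x^2*y^2-224*x^4) y := by
  have H := (((hasDerivAt_pow 5 y).const_mul 32).add
    ((hasDerivAt_pow 3 y).const_mul (64*x^2))).sub
    ((hasDerivAt_id' (x := y)).const_mul (224*x^4))
  refine H.congr_deriv ?_
  push_cast; ring

lemma hLx_x (h : x^2+y^2 ≠ 0) : HasDerivAt (fun t => LxF t y) (LxxF x y) x := by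
  have H := (hNx_x x y).div (hrx2 x y) (pow_ne_zero 2 h)
  have He : (fun t => LxF t y) = fun t : ℝ =>
      (32*t^5+64*t^3*y^2-224*t*y^4)/(t^2+y^2)^2 := rfl
  rw [He]
  refine H.congr_deriv ?_
  simp only [LxxF]; field_simp; ring

lemma hLx_y (h : x^2+y^2 ≠ 0) : HasDerivAt (fun t => LxF x t) (LxyF x y) y := by
  have H := (hNx_y x y).div (hry2 x y) (pow_ne_zero 2 h)
  have He : (fun t => LxF x t) = fun t : ℝ =>
      (32*x^5+64*x^3*t^2-224*x*t^4)/(x^2+t^2)^2 := rfl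
  rw [He]
  refine H.congr_deriv ?_
  simp only [LxyF]; field_simp; ring

lemma hLy_x (h : x^2+y^2 ≠ 0) : HasDerivAt (fun t => LyF t y) (LxyF x y) x := by
  have H := (hNy_x x y).div (hrx2 x y) (pow_ne_zero 2 h)
  have He : (fun t => LyF t y) = fun t : ℝ =>
      (32*y^5+64*t^2*y^3-224*t^4*y)/(t^2+y^2)^2 := rfl
  rw [He]
  refine H.congr_deriv ?_
  simp only [LxyF]; field_simp; ring

lemma hLy_y (h : x^2+y^2 ≠ 0) : HasDerivAt (fun t => LyF x t) (LyyF x y) y := by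
  have H := (hNy_y x y).div (hry2 x y) (pow_ne_zero 2 h)
  have He : (fun t => LyF x t) = fun t : ℝ =>
      (32*t^5+64*x^2*t^3-224*x^4*t)/(x^2+t^2)^2 := rfl
  rw [He]
  refine H.congr_deriv ?_
  simp only [LyyF]; field_simp; ring

end derivs

section assemble
variable (x y : ℝ)

lemma evx (h : x^2+y^2 ≠ 0) : ∀ᶠ t in nhds x, t^2 + y^2 ≠ 0 := by
  have hc : ContinuousAt (fun t : ℝ => t^2 + y^2) x := by fun_prop
  exact hc.eventually_ne h

lemma evy (h : x^2+y^2 ≠ 0) : ∀ᶠ t in nhds y, x^2 + t^2 ≠ 0 := by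
  have hc : ContinuousAt (fun t : ℝ => x^2 + t^2) y := by fun_prop
  exact hc.eventually_ne h

lemma pdx_G (h : x^2+y^2 ≠ 0) : pdx G x y = GxF x y := (hG_x x y h).deriv

lemma pdy_G (h : x^2+y^2 ≠ 0) : pdy G x y = GyF x y := (hG_y x y h).deriv

lemma lapG_eq (h : x^2+y^2 ≠ 0) : lapG x y = L x y := by
  have e1 : pdx (pdx G) x y = GxxF x y := by
    have hev : (fun t => pdx G t y) =ᶠ[nhds x] (fun t => GxF t y) := by
      filter_upwards [evx x y h] with t ht using pdx_G t y ht
    show deriv (fun t => pdx G t y) x = _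
    rw [hev.deriv_eq]; exact (hGx_x x y h).deriv
  have e2 : pdy (pdy G) x y = GyyF x y := by
    have hev : (fun t => pdy G x t) =ᶠ[nhds y] (fun t => GyF x t) := by
      filter_upwards [evy x y h] with t ht using pdy_G x t ht
    show deriv (fun t => pdy G x t) y = _
    rw [hev.deriv_eq]; exact (hGy_y x y h).deriv
  show pdx (pdx G) x y + pdy (pdy G) x y = L x y
  rw [e1, e2]
  simp only [GxxF, GyyF, L]; field_simp; ring

lemma pdx_lapG (h : x^2+y^2 ≠ 0) : pdx lapG x y = LxF x y := by
  have hev : (fun t => lapG t y) =ᶠ[nhds x] (fun t => L t y) := by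
    filter_upwards [evx x y h] with t ht using lapG_eq t y ht
  show deriv (fun t => lapG t y) x = _
  rw [hev.deriv_eq]; exact (hL_x x y h).deriv

lemma pdy_lapG (h : x^2+y^2 ≠ 0) : pdy lapG x y = LyF x y := by
  have hev : (fun t => lapG x t) =ᶠ[nhds y] (fun t => L x t) := by
    filter_upwards [evy x y h] with t ht using lapG_eq x t ht
  show deriv (fun t => lapG x t) y = _
  rw [hev.deriv_eq]; exact (hL_y x y h).deriv

lemma pdx_pdx_lapG (h : x^2+y^2 ≠ 0) : pdx (pdx lapG) x y = LxxF x y := by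
  have hev : (fun t => pdx lapG t y) =ᶠ[nhds x] (fun t => LxF t y) := by
    filter_upwards [evx x y h] with t ht using pdx_lapG t y ht
  show deriv (fun t => pdx lapG t y) x = _
  rw [hev.deriv_eq]; exact (hLx_x x y h).deriv

lemma pdy_pdx_lapG (h : x^2+y^2 ≠ 0) : pdy (pdx lapG) x y = LxyF x y := by
  have hev : (fun t => pdx lapG x t) =ᶠ[nhds y] (fun t => LxF x t) := by
    filter_upwards [evy x y h] with t ht using pdx_lapG x t ht
  show deriv (fun t => pdx lapG x t) y = _
  rw [hev.deriv_eq]; exact (hLx_y x y h).deriv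

lemma pdx_pdy_lapG (h : x^2+y^2 ≠ 0) : pdx (pdy lapG) x y = LxyF x y := by
  have hev : (fun t => pdy lapG t y) =ᶠ[nhds x] (fun t => LyF t y) := by
    filter_upwards [evx x y h] with t ht using pdy_lapG t y ht
  show deriv (fun t => pdy lapG t y) x = _
  rw [hev.deriv_eq]; exact (hLy_x x y h).deriv

lemma pdy_pdy_lapG (h : x^2+y^2 ≠ 0) : pdy (pdy lapG) x y = LyyF x y := by
  have hev : (fun t => pdy lapG x t) =ᶠ[nhds y] (fun t => LyF x t) := by
    filter_upwards [evy x y h] with t ht using pdy_lapG x t ht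
  show deriv (fun t => pdy lapG x t) y = _
  rw [hev.deriv_eq]; exact (hLy_y x y h).deriv

end assemble

theorem stmt_11 : ∃ C : ℝ, 0 < C ∧
    ∀ x y : ℝ, 0 < x ^ 2 + y ^ 2 → x ^ 2 + y ^ 2 < 1 →
      |pdx (pdx lapG) x y| ≤ C ∧ |pdx (pdy lapG) x y| ≤ C ∧
      |pdy (pdx lapG) x y| ≤ C ∧ |pdy (pdy lapG) x y| ≤ C := by
  refine ⟨2000, by norm_num, fun x y hpos _ => ?_⟩
  have h : x^2 + y^2 ≠ 0 := ne_of_gt hpos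
  have hr3 : (0:ℝ) < (x^2+y^2)^3 := pow_pos hpos 3
  have key : ∀ n : ℝ, |n| ≤ 2000 * (x^2+y^2)^3 → |n/(x^2+y^2)^3| ≤ 2000 := by
    intro n hn
    rw [abs_div, abs_of_pos hr3, div_le_iff₀ hr3]
    exact hn
  refine ⟨?_, ?_, ?_, ?_⟩
  · rw [pdx_pdx_lapG x y h]
    apply key
    rw [abs_le]
    constructor <;> nlinarith [sq_nonneg (x^3), sq_nonneg (y^3), sq_nonneg (x^2*y), sq_nonneg (x*y^2)]
  · rw [pdx_pdy_lapG x y h]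
    apply key
    rw [abs_le]
    constructor <;> nlinarith [sq_nonneg (x^3), sq_nonneg (y^3), sq_nonneg (x^2*y - x*y^2), sq_nonneg (x^2*y + x*y^2)]
  · rw [pdy_pdx_lapG x y h]
    apply key
    rw [abs_le]
    constructor <;> nlinarith [sq_nonneg (x^3), sq_nonneg (y^3), sq_nonneg (x^2*y - x*y^2), sq_nonneg (x^2*y + x*y^2)]
  · rw [pdy_pdy_lapG x y h]
    apply key
    rw [abs_le]
    constructor <;> nlinarith [sq_nonneg (x^3), sq_nonneg (y^3), sq_nonneg (x^2*y), sq_nonneg (x*y^2)]
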